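/- Let X be a Frobenius split variety over a field of characteristic p > 0, and let Y ⊆ X be an effective Cartier divisor that is compatibly Frobenius split (the splitting φ : F_* O_X → O_X satisfies φ(F_* I_Y) ⊆ I_Y). Then X is Frobenius split along the divisor (p−1)Y, i.e. the map O_X → F_* O_X((p−1)Y), 1 ↦ s^{p−1}, splits, where s is the canonical section of O_X(Y). -/

import Mathlib

/-!
STATEMENT 11.  Let `X` be a Frobenius split variety over a field of characteristic
`p > 0`, and let `Y ⊆ X` be an effective Cartier divisor that is compatibly Frobenius
split:  the splitting `φ : F_* O_X → O_X` satisfies `φ(F_* I_Y) ⊆ I_Y`.  Then `X` is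
Frobenius split along `(p−1)Y`:  the map `O_X → F_* O_X((p−1)Y)`, `1 ↦ s^{p−1}`, splits,
where `s` is the canonical section of `O_X(Y)`.

Affine model:  `X = Spec R`, `Y` cut out by the nonzerodivisor `s`, with ideal sheaf
`I_Y = (s)`.  A Frobenius splitting is an additive `φ : R → R` with `φ(a^p x) = a φ(x)`
and `φ(1) = 1`; compatibility means `φ((s)) ⊆ (s)`.  The conclusion is a splitting along
`(p-1)·div(s)`:  an additive `ψ` with `ψ(a^p x) = a ψ(x)` and `ψ(s^{p-1}) = 1`.
-/

def FrobSplitAlong (R : Type*) [CommRing R] (p : ℕ) (e : ℕ) (s : R) : Prop :=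
  ∃ φ : R →+ R, (∀ a x : R, φ (a ^ p ^ e * x) = a * φ x) ∧ φ s = 1

theorem split_along_p_sub_one_of_compatibly_split
    (R : Type*) [CommRing R] (p : ℕ) [Fact p.Prime] [CharP R p]
    (s : R) (hs : s ∈ nonZeroDivisors R)
    (φ : R →+ R) (hφlin : ∀ a x : R, φ (a ^ p * x) = a * φ x) (hφ1 : φ 1 = 1)
    (hcompat : ∀ x ∈ Ideal.span {s}, φ x ∈ Ideal.span {s}) :
    FrobSplitAlong R p 1 (s ^ (p - 1)) := by
  have hdvd : ∀ x : R, ∃ c : R, φ (s * x) = s * c := by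
    intro x
    obtain ⟨c, hc⟩ := Ideal.mem_span_singleton.1
      (hcompat (s * x) (Ideal.mem_span_singleton.2 ⟨x, rfl⟩))
    exact ⟨c, hc⟩
  choose f hf using hdvd
  have hcanc : ∀ a b : R, s * a = s * b → a = b := by
    intro a b h
    have h0 : (a - b) * s = 0 := by
      rw [sub_mul, sub_eq_zero, mul_comm a s, mul_comm b s, h]
    have := hs.2 (a - b) h0
    linear_combination this
  have hadd : ∀ x y : R, f (x + y) = f x + f y := by
    intro x y
    apply hcanc
    rw [← hf, mul_add, map_add, hf, hf, mul_add]
  have hzero : f 0 = 0 := by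
    apply hcanc
    rw [← hf, mul_zero, map_zero]
  refine ⟨AddMonoidHom.mk' f hadd, ?_, ?_⟩
  · intro a x
    apply hcanc
    simp only [AddMonoidHom.mk'_apply]
    rw [← hf]
    have : s * (a ^ p ^ 1 * x) = a ^ p * (s * x) := by ring
    rw [this, hφlin, hf]
    ring
  · simp only [AddMonoidHom.mk'_apply]
    apply hcanc
    rw [← hf]
    have hp : 1 < p := (Fact.out : p.Prime).one_lt
    have h1 : s * s ^ (p - 1) = s ^ p := by
      rw [← pow_succ']
      congr 1
      omega
    rw [h1, show (s : R) ^ p = s ^ p * 1 by ring, hφlin, hφ1]
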